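/- Let i ∈ {0,…,J}. For any (F_j)-supermartingale (Y_j)_{j=i,…,J} with Y_i = 0 almost surely and Y_j integrable for every j, and for any stopping time τ (with respect to (F_j)) taking values in {i,…,J}, one has E[Z_τ | F_i] ≤ E[max_{i≤j≤J}(Z_j − Y_j) | F_i] almost surely. -/

import Mathlib

open MeasureTheory ProbabilityTheory Filter

/-- Duality inequality (1): for any supermartingale (Y_j)_{j=i,…,J} with Y_i = 0 a.s. and any
stopping time τ with values in {i,…,J}, one has
E[Z_τ | F_i] ≤ E[max_{i≤j≤J}(Z_j − Y_j) | F_i] almost surely. -/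
theorem dual_upper_bound_supermartingale
    {Ω : Type*} {m0 : MeasurableSpace Ω} (P : Measure Ω) [IsProbabilityMeasure P]
    (J i : ℕ) (hiJ : i ≤ J) (ℱ : Filtration ℕ m0)
    (Z : ℕ → Ω → ℝ)
    (hZadapted : Adapted ℱ Z)
    (hZnonneg : ∀ j ω, 0 ≤ Z j ω)
    (hZint : ∀ j, Integrable (Z j) P)
    (Y : ℕ → Ω → ℝ)
    (hYadapted : ∀ j, i ≤ j → j ≤ J → StronglyMeasurable[ℱ j] (Y j))
    (hYint : ∀ j, i ≤ j → j ≤ J → Integrable (Y j) P)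
    (hYsuper : ∀ j k, i ≤ j → j ≤ k → k ≤ J → P[Y k | ℱ j] ≤ᵐ[P] Y j)
    (hYi : Y i =ᵐ[P] 0)
    (τ : Ω → ℕ) (hτ : IsStoppingTime ℱ (fun ω => (τ ω : WithTop ℕ))) (hτi : ∀ ω, i ≤ τ ω) (hτJ : ∀ ω, τ ω ≤ J)
    (hMint : Integrable (fun ω =>
      (Finset.Icc i J).sup' (Finset.nonempty_Icc.2 hiJ) fun j => Z j ω - Y j ω) P) :
    P[fun ω => Z (τ ω) ω | ℱ i] ≤ᵐ[P]
      P[fun ω =>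
        (Finset.Icc i J).sup' (Finset.nonempty_Icc.2 hiJ) fun j => Z j ω - Y j ω | ℱ i] := by
  classical
  set τ' : Ω → WithTop ℕ := fun ω => (τ ω : WithTop ℕ) with hτ'
  set M : Ω → ℝ := fun ω =>
    (Finset.Icc i J).sup' (Finset.nonempty_Icc.2 hiJ) fun j => Z j ω - Y j ω with hM
  -- extend Y to a globally adapted integrable process
  set Y' : ℕ → Ω → ℝ := fun j => if j < i then 0 else Y (min j J) with hY'
  have hY'adapted : StronglyAdapted ℱ Y' := by
    intro j
    by_cases h : j < i
    · simp only [hY', if_pos h]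
      exact stronglyMeasurable_const
    · simp only [hY', if_neg h]
      push_neg at h
      exact (hYadapted (min j J) (le_min h hiJ) (min_le_right _ _)).mono
        (ℱ.mono (min_le_left _ _))
  have hY'int : ∀ j, Integrable (Y' j) P := by
    intro j
    by_cases h : j < i
    · simp only [hY', if_pos h]; exact integrable_zero _ _ _
    · simp only [hY', if_neg h]
      push_neg at h
      exact hYint (min j J) (le_min h hiJ) (min_le_right _ _)
  have hY'eq : ∀ j, i ≤ j → j ≤ J → Y' j = Y j := by
    intro j hij hjJ
    simp only [hY', if_neg (not_lt.2 hij), min_eq_left hjJ]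
  -- Doob decomposition
  set N : ℕ → Ω → ℝ := martingalePart Y' ℱ P with hN
  set A : ℕ → Ω → ℝ := predictablePart Y' ℱ P with hA
  have hNmart : Martingale N ℱ P := martingale_martingalePart hY'adapted hY'int
  have hNint : ∀ j, Integrable (N j) P := fun j => hNmart.integrable j
  have hAint : ∀ j, Integrable (A j) P := fun j =>
    integrable_finset_sum' _ fun k _ => integrable_condExp
  have hNA : ∀ j ω, Y' j ω = N j ω + A j ω := by
    intro j ω
    simp only [hN, hA, martingalePart, Pi.sub_apply, sub_add_cancel]
  -- the predictable part is a.e. nonincreasing on [i, J] (supermartingale)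
  have hstep : ∀ k, i ≤ k → k + 1 ≤ J → P[Y' (k+1) - Y' k | ℱ k] ≤ᵐ[P] 0 := by
    intro k hik hkJ
    have h1 : P[Y' (k+1) - Y' k | ℱ k] =ᵐ[P] P[Y' (k+1) | ℱ k] - P[Y' k | ℱ k] :=
      condExp_sub (hY'int _) (hY'int _) _
    have h2 : P[Y' k | ℱ k] = Y' k :=
      condExp_of_stronglyMeasurable (ℱ.le k) (hY'adapted k) (hY'int k)
    have h3 : P[Y' (k+1) | ℱ k] ≤ᵐ[P] Y' k := by
      rw [hY'eq (k+1) (hik.trans (Nat.le_succ k)) hkJ, hY'eq k hik (le_trans (Nat.le_succ k) hkJ)]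
      exact hYsuper k (k+1) hik (Nat.le_succ k) hkJ
    filter_upwards [h1, h3] with ω hω1 hω3
    rw [hω1, h2]
    simp only [Pi.sub_apply, Pi.zero_apply, sub_nonpos]
    exact hω3
  have hAmono : ∀ j, i ≤ j → j ≤ J → A j ≤ᵐ[P] A i := by
    intro j hij hjJ
    have hsum : ∀ ω, A j ω = A i ω + ∑ k ∈ Finset.Ico i j, (P[Y' (k+1) - Y' k | ℱ k]) ω := by
      intro ω
      simp only [hA, predictablePart]
      rw [← Finset.sum_range_add_sum_Ico _ hij]
      simp [Finset.sum_apply]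
    have hterm : ∀ k ∈ Finset.Ico i j, (P[Y' (k+1) - Y' k | ℱ k]) ≤ᵐ[P] 0 := by
      intro k hk
      rw [Finset.mem_Ico] at hk
      exact hstep k hk.1 (Nat.succ_le_of_lt (lt_of_lt_of_le hk.2 hjJ))
    have : ∀ᵐ ω ∂P, ∀ k, k ∈ Finset.Ico i j → (P[Y' (k+1) - Y' k | ℱ k]) ω ≤ 0 := by
      rw [ae_all_iff]
      intro k
      by_cases hk : k ∈ Finset.Ico i j
      · filter_upwards [hterm k hk] with ω hω _; exact hω
      · filter_upwards with ω h; exact absurd h hk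
    filter_upwards [this] with ω hω
    rw [hsum ω]
    have : ∑ k ∈ Finset.Ico i j, (P[Y' (k+1) - Y' k | ℱ k]) ω ≤ 0 :=
      Finset.sum_nonpos hω
    linarith
  -- a.e. bound on A τ
  have hAτ : ∀ᵐ ω ∂P, A (τ ω) ω ≤ A i ω := by
    have : ∀ᵐ ω ∂P, ∀ j, i ≤ j → j ≤ J → A j ω ≤ A i ω := by
      rw [ae_all_iff]
      intro j
      by_cases hj : i ≤ j ∧ j ≤ J
      · filter_upwards [hAmono j hj.1 hj.2] with ω hω _ _; exact hω
      · filter_upwards with ω h1 h2; exact absurd ⟨h1, h2⟩ hj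
    filter_upwards [this] with ω hω
    exact hω (τ ω) (hτi ω) (hτJ ω)
  -- optional sampling for the martingale part
  haveI : SigmaFinite (P.trim ((isStoppingTime_const ℱ i).measurableSpace_le)) :=
    inferInstance
  have hNτ : (fun ω => N i ω) =ᵐ[P] P[stoppedValue N τ' | ℱ i] := by
    have := hNmart.stoppedValue_ae_eq_condExp_of_le hτ (isStoppingTime_const ℱ i)
      (fun ω => WithTop.coe_le_coe.2 (hτi ω)) (fun ω => WithTop.coe_le_coe.2 (hτJ ω))
    rw [IsStoppingTime.measurableSpace_const] at this
    have hsv : stoppedValue N (fun _ => i) = fun ω => N i ω := rfl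
    simp only [stoppedValue_const] at this
    exact this
  -- integrability of stopped values
  have hZτint : Integrable (stoppedValue Z τ') P := integrable_stoppedValue ℕ hτ hZint (fun ω => WithTop.coe_le_coe.2 (hτJ ω))
  have hNτint : Integrable (stoppedValue N τ') P := integrable_stoppedValue ℕ hτ hNint (fun ω => WithTop.coe_le_coe.2 (hτJ ω))
  -- key: E[Y' τ | ℱ i] ≤ 0 a.e.
  have hYτint : Integrable (stoppedValue Y' τ') P := integrable_stoppedValue ℕ hτ hY'int (fun ω => WithTop.coe_le_coe.2 (hτJ ω))
  have hkey : P[stoppedValue Y' τ' | ℱ i] ≤ᵐ[P] 0 := by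
    have hle : stoppedValue Y' τ' ≤ᵐ[P] fun ω => stoppedValue N τ' ω + A i ω := by
      filter_upwards [hAτ] with ω hω
      change Y' (τ ω) ω ≤ N (τ ω) ω + A i ω
      rw [hNA]
      linarith
    have h1 : P[stoppedValue Y' τ' | ℱ i] ≤ᵐ[P]
        P[fun ω => stoppedValue N τ' ω + A i ω | ℱ i] :=
      condExp_mono hYτint (hNτint.add (hAint i)) hle
    have h2 : P[fun ω => stoppedValue N τ' ω + A i ω | ℱ i] =ᵐ[P]
        P[stoppedValue N τ' | ℱ i] + P[A i | ℱ i] := condExp_add hNτint (hAint i) _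
    have h3 : P[A i | ℱ i] = A i :=
      condExp_of_stronglyMeasurable (ℱ.le i) (stronglyAdapted_predictablePart' i) (hAint i)
    have h4 : ∀ᵐ ω ∂P, N i ω + A i ω = 0 := by
      filter_upwards [hYi] with ω hω
      rw [← hNA, hY'eq i le_rfl hiJ]
      simpa using hω
    filter_upwards [h1, h2, hNτ, h4] with ω hω1 hω2 hω3 hω4
    rw [Pi.zero_apply]
    have := hω1.trans (le_of_eq hω2)
    rw [h3] at this
    simp only [Pi.add_apply] at this
    rw [← hω3] at this
    linarith
  -- combine
  have hptwise : stoppedValue Z τ' ≤ᵐ[P] fun ω => M ω + stoppedValue Y' τ' ω := by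
    filter_upwards with ω
    have hmem : τ ω ∈ Finset.Icc i J := Finset.mem_Icc.2 ⟨hτi ω, hτJ ω⟩
    have hsup : Z (τ ω) ω - Y (τ ω) ω ≤ M ω :=
      Finset.le_sup' (fun j => Z j ω - Y j ω) hmem
    have hYY : Y' (τ ω) ω = Y (τ ω) ω := by rw [hY'eq (τ ω) (hτi ω) (hτJ ω)]
    change Z (τ ω) ω ≤ M ω + Y' (τ ω) ω
    rw [hYY]
    linarith
  have h1 : P[stoppedValue Z τ' | ℱ i] ≤ᵐ[P]
      P[fun ω => M ω + stoppedValue Y' τ' ω | ℱ i] :=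
    condExp_mono hZτint (hMint.add hYτint) hptwise
  have h2 : P[fun ω => M ω + stoppedValue Y' τ' ω | ℱ i] =ᵐ[P]
      P[M | ℱ i] + P[stoppedValue Y' τ' | ℱ i] := condExp_add hMint hYτint _
  have hgoal : P[stoppedValue Z τ' | ℱ i] ≤ᵐ[P] P[M | ℱ i] := by
    filter_upwards [h1, h2, hkey] with ω hω1 hω2 hω3
    have := hω1.trans (le_of_eq hω2)
    simp only [Pi.add_apply, Pi.zero_apply] at this hω3
    linarith
  exact hgoal
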